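/- Let k ≥ 2 and let c be a real number with 0 < c ≤ k^{−k}. Then there exists a unique λ ∈ (0, 1/k] with λ·((1−λ)/(k−1))^{k−1} = c, and this λ satisfies c·(k−1)^{k−1} ≤ λ ≤ c·k^{k−1}. (This is the analysis of the scalar optimization problem arising in the paper's eigenvalue lemma: the map λ ↦ λ((1−λ)/(k−1))^{k−1} is strictly increasing on (0, 1/k], takes value 0 at λ = 0 and k^{−k} at λ = 1/k.) -/

import Mathlib

/-- Let `k ≥ 2` and `0 < c ≤ k^{−k}`.  Then there is a unique `λ ∈ (0, 1/k]` with
`λ·((1−λ)/(k−1))^{k−1} = c`, and this `λ` satisfies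
`c·(k−1)^{k−1} ≤ λ ≤ c·k^{k−1}`. -/
theorem scalar_eigenvalue_characterization (k : ℕ) (hk : 2 ≤ k)
    (c : ℝ) (hc0 : 0 < c) (hc1 : c ≤ (1 / (k : ℝ)) ^ k) :
    ∃ lam : ℝ,
      (0 < lam ∧ lam ≤ 1 / (k : ℝ) ∧
        lam * ((1 - lam) / ((k : ℝ) - 1)) ^ (k - 1) = c ∧
        c * ((k : ℝ) - 1) ^ (k - 1) ≤ lam ∧ lam ≤ c * (k : ℝ) ^ (k - 1)) ∧
      ∀ mu : ℝ, 0 < mu → mu ≤ 1 / (k : ℝ) →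
        mu * ((1 - mu) / ((k : ℝ) - 1)) ^ (k - 1) = c → mu = lam := by
  obtain ⟨m, rfl⟩ : ∃ m, k = m + 2 := ⟨k - 2, by omega⟩
  simp only [show m + 2 - 1 = m + 1 from rfl] at *
  push_cast at hc1 ⊢
  rw [show (m:ℝ) + 2 - 1 = (m:ℝ) + 1 from by ring]
  have hKpos : (0:ℝ) < (m:ℝ) + 2 := by positivity
  have hM1 : (0:ℝ) < (m : ℝ) + 1 := by positivity
  set f : ℝ → ℝ := fun x => x * ((1 - x) / ((m : ℝ) + 1)) ^ (m + 1) with hf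
  -- derivative
  have hderiv : ∀ x : ℝ, HasDerivAt f
      (((1 - x) / ((m:ℝ)+1)) ^ m * ((1 - ((m:ℝ)+2) * x) / ((m:ℝ)+1))) x := by
    intro x
    have h1 : HasDerivAt (fun x : ℝ => (1 - x) / ((m:ℝ)+1)) (-1 / ((m:ℝ)+1)) x := by
      simpa using ((hasDerivAt_id x).const_sub 1).div_const ((m:ℝ)+1)
    have h2 := h1.pow (m + 1)
    have h3 : HasDerivAt f (1 * ((1 - x) / ((m:ℝ)+1)) ^ (m + 1) + x * (((m + 1 : ℕ) : ℝ) * ((1 - x) / ((m:ℝ)+1)) ^ (m + 1 - 1) * (-1 / ((m:ℝ)+1)))) x := (hasDerivAt_id x).mul h2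
    convert h3 using 1
    have hmm : m + 1 - 1 = m := by omega
    rw [hmm]
    push_cast
    have hM1ne : (m:ℝ) + 1 ≠ 0 := hM1.ne'
    rw [pow_succ]
    field_simp
    ring
  have hcont : Continuous f := by fun_prop
  -- strict monotonicity on [0, 1/(m+2)]
  have hmono : StrictMonoOn f (Set.Icc 0 (1 / ((m:ℝ)+2))) := by
    apply strictMonoOn_of_deriv_pos (convex_Icc _ _) hcont.continuousOn
    intro x hx
    rw [interior_Icc, Set.mem_Ioo] at hx
    rw [(hderiv x).deriv]
    have hKx : ((m:ℝ)+2) * x < 1 := by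
      have := hx.2
      rw [lt_div_iff₀ hKpos] at this
      linarith [mul_comm x ((m:ℝ)+2)]
    have hx1 : x < 1 := by nlinarith [hx.1]
    apply mul_pos
    · exact pow_pos (div_pos (by linarith) hM1) m
    · exact div_pos (by linarith) hM1
  -- value at endpoints
  have hfK : f (1 / ((m:ℝ)+2)) = (1 / ((m:ℝ)+2)) ^ (m + 2) := by
    have h : (1 - 1 / ((m:ℝ)+2)) / ((m:ℝ) + 1) = 1 / ((m:ℝ)+2) := by
      field_simp
      ring
    simp only [hf, h]
    ring
  have hf0 : f 0 = 0 := by simp [hf]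
  -- existence via IVT
  have h0K : (0:ℝ) ≤ 1 / ((m:ℝ)+2) := by positivity
  have hmem : c ∈ Set.Icc (f 0) (f (1 / ((m:ℝ)+2))) := by
    rw [hf0, hfK]
    exact ⟨hc0.le, hc1⟩
  obtain ⟨lam, hlamMem, hflam⟩ := intermediate_value_Icc h0K hcont.continuousOn hmem
  have hlam0 : 0 < lam := by
    rcases lt_or_eq_of_le hlamMem.1 with h | h
    · exact h
    · exfalso; rw [← h, hf0] at hflam; exact hc0.ne hflam
  have hlam1 : lam ≤ 1 / ((m:ℝ)+2) := hlamMem.2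
  have hlamlt1 : lam ≤ 1 := le_trans hlam1 (by rw [div_le_one hKpos]; nlinarith)
  -- lower bound
  have hlow : c * ((m:ℝ) + 1) ^ (m + 1) ≤ lam := by
    have heq : c * ((m:ℝ) + 1) ^ (m + 1) = lam * (1 - lam) ^ (m + 1) := by
      rw [← hflam]
      simp only [hf]
      rw [div_pow]
      field_simp
    rw [heq]
    calc lam * (1 - lam) ^ (m + 1) ≤ lam * 1 := by
          apply mul_le_mul_of_nonneg_left _ hlam0.le
          exact pow_le_one₀ (by linarith) (by linarith)
      _ = lam := mul_one lam
  -- upper bound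
  have hup : lam ≤ c * ((m:ℝ)+2) ^ (m + 1) := by
    have h3 : (1 : ℝ) / ((m:ℝ)+2) ≤ (1 - lam) / ((m:ℝ) + 1) := by
      rw [div_le_div_iff₀ hKpos hM1]
      have : ((m:ℝ)+2) * lam ≤ 1 := by
        rw [← le_div_iff₀' hKpos]; exact hlam1
      nlinarith
    have h4 : ((1:ℝ) / ((m:ℝ)+2)) ^ (m + 1) ≤ ((1 - lam) / ((m:ℝ) + 1)) ^ (m + 1) :=
      pow_le_pow_left₀ (by positivity) h3 (m + 1)
    have h5 : lam * ((1:ℝ) / ((m:ℝ)+2)) ^ (m + 1) ≤ c := by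
      rw [← hflam]
      exact mul_le_mul_of_nonneg_left h4 hlam0.le
    rw [one_div, inv_pow, mul_comm, ← div_eq_inv_mul, div_le_iff₀ (by positivity)] at h5
    linarith [h5]
  refine ⟨lam, ⟨hlam0, hlam1, hflam, hlow, hup⟩, ?_⟩
  intro mu hmu0 hmu1 hfmu
  exact hmono.injOn ⟨hmu0.le, hmu1⟩ ⟨hlam0.le, hlam1⟩ (hfmu.trans hflam.symm)
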